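/- Let C ⊆ ℝ^d be open, let Ω, E ⊆ C be open and let Γ ⊆ C, with Ω, Γ, E pairwise disjoint and C = Ω ∪ Γ ∪ E. Let k ∈ ℕ and let u₁, u₂ : ℝ^d → ℝ be C^k functions on ℝ^d. Define u : ℝ^d → ℝ by u(x) = u₁(x) for x ∈ Ω ∪ Γ and u(x) = u₂(x) for x ∈ E. If for every x ∈ Γ and every integer 0 ≤ j ≤ k the j-th iterated Fréchet derivatives of u₁ and u₂ agree at x (in particular u₁(x) = u₂(x) for x ∈ Γ), then u is C^k on C. -/

import Mathlib

open Set Asymptotics Filter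

lemma indicator_glue_aux {d : ℕ}
    (C Ω E Γ : Set (EuclideanSpace ℝ (Fin d)))
    (hC : IsOpen C) (hΩ : IsOpen Ω) (hE : IsOpen E)
    (hΩE : Disjoint Ω E) (hΓE : Disjoint Γ E) (hcover : C = Ω ∪ Γ ∪ E)
    (k : ℕ) :
    ∀ {F : Type} [NormedAddCommGroup F] [NormedSpace ℝ F]
      (v : EuclideanSpace ℝ (Fin d) → F),
      ContDiff ℝ k v → (∀ y ∈ Γ, ∀ j : ℕ, j ≤ k → iteratedFDeriv ℝ j v y = 0) →
      ContDiffOn ℝ k (E.indicator v) C := by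
  induction k with
  | zero =>
    intro F _ _ v hv hvan
    rw [Nat.cast_zero, contDiffOn_zero]
    intro x hx
    apply ContinuousAt.continuousWithinAt
    rw [hcover] at hx
    rcases hx with (hx | hx) | hx
    · have h0 : E.indicator v =ᶠ[nhds x] (fun _ => (0 : F)) :=
        Filter.eventuallyEq_of_mem (hΩ.mem_nhds hx)
          (fun y hy => Set.indicator_of_notMem (fun hyE => hΩE.ne_of_mem hy hyE rfl) v)
      exact continuousAt_const.congr h0.symm
    · have hxE : x ∉ E := fun hxE => hΓE.ne_of_mem hx hxE rfl
      have hwx : E.indicator v x = 0 := Set.indicator_of_notMem hxE v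
      have hvx : v x = 0 := by
        have h := congrArg (fun f => ‖f‖) (hvan x hx 0 le_rfl)
        simpa [norm_iteratedFDeriv_zero] using h
      unfold ContinuousAt
      rw [hwx]
      apply squeeze_zero_norm (fun y => norm_indicator_le_norm_self v y)
      have : Filter.Tendsto (fun y => ‖v y‖) (nhds x) (nhds ‖v x‖) :=
        (hv.continuous.norm.tendsto x)
      rwa [hvx, norm_zero] at this
    · have h0 : E.indicator v =ᶠ[nhds x] v :=
        Filter.eventuallyEq_of_mem (hE.mem_nhds hx)
          (fun y hy => Set.indicator_of_mem hy v)
      exact (hv.continuous.continuousAt).congr h0.symm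
  | succ n ih =>
    intro F _ _ v hv hvan
    rw [Nat.cast_succ] at hv ⊢
    have hvd1 : Differentiable ℝ v := (contDiff_succ_iff_fderiv.mp hv).1
    have hv' : ContDiff ℝ n (fderiv ℝ v) := (contDiff_succ_iff_fderiv.mp hv).2.2
    have hdiff : ∀ x ∈ C, HasFDerivAt (E.indicator v) (E.indicator (fderiv ℝ v) x) x := by
      intro x hx
      rw [hcover] at hx
      rcases hx with (hx | hx) | hx
      · have h0 : E.indicator v =ᶠ[nhds x] (fun _ => (0 : F)) :=
          Filter.eventuallyEq_of_mem (hΩ.mem_nhds hx)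
            (fun y hy => Set.indicator_of_notMem (fun hyE => hΩE.ne_of_mem hy hyE rfl) v)
        have hxE : x ∉ E := fun hxE => hΩE.ne_of_mem hx hxE rfl
        rw [Set.indicator_of_notMem hxE]
        exact (hasFDerivAt_const (0 : F) x).congr_of_eventuallyEq h0
      · have hxE : x ∉ E := fun hxE => hΓE.ne_of_mem hx hxE rfl
        have hvx : v x = 0 := by
          have h := congrArg (fun f => ‖f‖) (hvan x hx 0 (by omega))
          simpa [norm_iteratedFDeriv_zero] using h
        have hdvx : fderiv ℝ v x = 0 := by
          have h1 := hvan x hx 1 (by omega)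
          ext h
          have := congrFun (congrArg DFunLike.coe h1) ![h]
          simpa [iteratedFDeriv_one_apply] using this
        rw [Set.indicator_of_notMem hxE]
        have hvd : HasFDerivAt v (0 : EuclideanSpace ℝ (Fin d) →L[ℝ] F) x := by
          have := (hvd1 x).hasFDerivAt
          rwa [hdvx] at this
        rw [hasFDerivAt_iff_isLittleO_nhds_zero] at hvd ⊢
        have hle : ∀ y : EuclideanSpace ℝ (Fin d),
            ‖E.indicator v (x + y) - E.indicator v x
              - (0 : EuclideanSpace ℝ (Fin d) →L[ℝ] F) y‖
            ≤ ‖v (x + y) - v x - (0 : EuclideanSpace ℝ (Fin d) →L[ℝ] F) y‖ := by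
          intro y
          simp only [ContinuousLinearMap.zero_apply, sub_zero,
            Set.indicator_of_notMem hxE, hvx]
          simpa using norm_indicator_le_norm_self v (x + y)
        exact (Asymptotics.isBigO_of_le _ hle).trans_isLittleO hvd
      · have h0 : E.indicator v =ᶠ[nhds x] v :=
          Filter.eventuallyEq_of_mem (hE.mem_nhds hx)
            (fun y hy => Set.indicator_of_mem hy v)
        rw [Set.indicator_of_mem hx]
        exact ((hvd1 x).hasFDerivAt).congr_of_eventuallyEq h0
    have hvan' : ∀ y ∈ Γ, ∀ j : ℕ, j ≤ n → iteratedFDeriv ℝ j (fderiv ℝ v) y = 0 := by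
      intro y hy j hj
      have h := congrArg (fun f => ‖f‖) (hvan y hy (j + 1) (by omega))
      simp only [norm_zero] at h
      rw [← norm_iteratedFDeriv_fderiv] at h
      simpa using norm_eq_zero.mp h
    have hmain := ih (fderiv ℝ v) hv' hvan'
    rw [contDiffOn_succ_iff_fderiv_of_isOpen hC]
    refine ⟨fun x hx => (hdiff x hx).differentiableAt.differentiableWithinAt,
      fun h => absurd h (by simp), ?_⟩
    exact hmain.congr fun x hx => (hdiff x hx).fderiv

/-- Gluing principle: a function that equals a `C^k` function `u₁` on `Ω ∪ Γ`
and a `C^k` function `u₂` on `E`, where `C = Ω ∪ Γ ∪ E` with `Ω, Γ, E`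
pairwise disjoint and `C, Ω, E` open, is `C^k` on `C` provided all iterated
derivatives of `u₁` and `u₂` up to order `k` agree on the interface `Γ`. -/
theorem glued_function_contDiffOn {d : ℕ}
    (C Ω E Γ : Set (EuclideanSpace ℝ (Fin d)))
    (hC : IsOpen C) (hΩ : IsOpen Ω) (hE : IsOpen E)
    (hΩΓ : Disjoint Ω Γ) (hΩE : Disjoint Ω E) (hΓE : Disjoint Γ E)
    (hcover : C = Ω ∪ Γ ∪ E)
    (k : ℕ) (u₁ u₂ u : EuclideanSpace ℝ (Fin d) → ℝ)
    (h1 : ContDiff ℝ k u₁) (h2 : ContDiff ℝ k u₂)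
    (hu1 : ∀ x ∈ Ω ∪ Γ, u x = u₁ x) (hu2 : ∀ x ∈ E, u x = u₂ x)
    (hmatch : ∀ x ∈ Γ, ∀ j : ℕ, j ≤ k →
      iteratedFDeriv ℝ j u₁ x = iteratedFDeriv ℝ j u₂ x) :
    ContDiffOn ℝ k u C := by
  have hvan : ∀ y ∈ Γ, ∀ j : ℕ, j ≤ k → iteratedFDeriv ℝ j (u₂ - u₁) y = 0 := by
    intro y hy j hj
    have h2' : ContDiff ℝ j u₂ := h2.of_le (by exact_mod_cast hj)
    have h1' : ContDiff ℝ j u₁ := h1.of_le (by exact_mod_cast hj)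
    have hadd : iteratedFDeriv ℝ j (u₂ + -u₁) y
        = iteratedFDeriv ℝ j u₂ y + iteratedFDeriv ℝ j (-u₁) y :=
      iteratedFDeriv_add_apply h2'.contDiffAt h1'.neg.contDiffAt
    rw [sub_eq_add_neg, hadd, iteratedFDeriv_neg_apply, hmatch y hy j hj, add_neg_cancel]
  have haux := indicator_glue_aux C Ω E Γ hC hΩ hE hΩE hΓE hcover k (u₂ - u₁)
    (h2.sub h1) hvan
  have hsum := (h1.contDiffOn (s := C)).add haux
  apply hsum.congr
  intro x hx
  rw [hcover] at hx
  rcases hx with hx | hx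
  · have hxE : x ∉ E := fun hxE => by
      rcases hx with hx | hx
      exacts [hΩE.ne_of_mem hx hxE rfl, hΓE.ne_of_mem hx hxE rfl]
    rw [hu1 x hx]
    simp [Set.indicator_of_notMem hxE]
  · rw [hu2 x hx]
    simp only [Set.indicator_of_mem hx, Pi.sub_apply]
    ring
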